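/- Let J, K, k be integers with 0 ≤ K ≤ J and 0 < k < K. Then for every point (η; φ_1,…,φ_J) ∈ ℝ^{1+J} such that η ≠ 0 and K'η ≠ φ_{i_1} + ⋯ + φ_{i_{J'}} for all integers 1 ≤ K' ≤ J' ≤ J and all pairwise distinct indices i_1,…,i_{J'} ∈ {1,…,J}, one has f_{J,K}(η;φ_1,…,φ_J) = (1/2) Σ_{j=0}^{J} (f_{j,k} ⊙ g_{J−j,K−k})(η;φ_1,…,φ_J). -/

import Mathlib

open scoped BigOperators ENNReal
open MeasureTheory

/-- ω_a coefficients: ω_0 = -1, ω_{±1} = 1/2, otherwise 0. -/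
noncomputable def omegaCoef : ℤ → ℝ := fun a =>
  if a = 0 then -1 else if a = 1 ∨ a = -1 then (1 : ℝ) / 2 else 0

/-- The functions `f_{J,K}` of `1+J` real variables (extra variables beyond the first `J`
are ignored); `f_{J,K} = 0` unless `1 ≤ J` and `0 ≤ K ≤ J`. For `J ≥ 2`,
`f_{J,K}(η;φ) = η⁻¹ Σ_{a=-1}^{1} ω_a (1/J!) Σ_{σ ∈ S_J} g_{J-1,K+a}(η;φ_{σ(1)},…,φ_{σ(J-1)})`,
where `g_{J,K}(η;φ) = -2K (Kη - φ_1 - ⋯ - φ_J)⁻¹ f_{J,K}(η;φ)` is inlined. -/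
noncomputable def fAux : ℕ → ℤ → ℝ → (ℕ → ℝ) → ℝ
  | 0, _, _, _ => 0
  | 1, K, η, _ => if K = 0 then -η⁻¹ else if K = 1 then η⁻¹ else 0
  | (J+2), K, η, φ =>
      if 0 ≤ K ∧ K ≤ (J : ℤ) + 2 then
        η⁻¹ * ∑ a ∈ ({-1, 0, 1} : Finset ℤ), omegaCoef a *
          ((Nat.factorial (J+2) : ℝ)⁻¹ *
            ∑ σ : Equiv.Perm (Fin (J+2)),
              (fun ψ : ℕ → ℝ =>
                (-2 * ((K + a : ℤ) : ℝ)) /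
                    (((K + a : ℤ) : ℝ) * η - ∑ i ∈ Finset.range (J+1), ψ i) *
                  fAux (J+1) (K+a) η ψ)
              (fun i => if h : i < J+2 then φ (σ ⟨i, h⟩) else φ i))
      else 0

/-- The functions `g_{J,K} = -2K (Kη - φ_1 - ⋯ - φ_J)⁻¹ f_{J,K}`. -/
noncomputable def gAux (J : ℕ) (K : ℤ) (η : ℝ) (φ : ℕ → ℝ) : ℝ :=
  (-2 * (K : ℝ)) / ((K : ℝ) * η - ∑ i ∈ Finset.range J, φ i) * fAux J K η φ

/-- Symmetric product `p ⊙ q` of a function of `1+I` variables and one of `1+J` variables. -/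
noncomputable def symProd (I J : ℕ) (p q : ℝ → (ℕ → ℝ) → ℝ) (η : ℝ) (φ : ℕ → ℝ) : ℝ :=
  (Nat.factorial (I + J) : ℝ)⁻¹ *
    ∑ σ : Equiv.Perm (Fin (I + J)),
      p η (fun i => if h : i < I + J then φ (σ ⟨i, h⟩) else φ i) *
      q η (fun i => if h : i + I < I + J then φ (σ ⟨i + I, h⟩) else φ (i + I))

open Finset Equiv Function

/-- permuted-truncated assignment -/
def pd (n : ℕ) (σ : Equiv.Perm (Fin n)) (φ : ℕ → ℝ) : ℕ → ℝ :=
  fun i => if h : i < n then φ (σ ⟨i, h⟩) else φ i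

/-- shift -/
def sh (j : ℕ) (φ : ℕ → ℝ) : ℕ → ℝ := fun i => φ (i + j)

lemma symProd_eq (I J : ℕ) (p q : ℝ → (ℕ → ℝ) → ℝ) (η : ℝ) (φ : ℕ → ℝ) :
    symProd I J p q η φ =
      (Nat.factorial (I + J) : ℝ)⁻¹ *
        ∑ σ : Equiv.Perm (Fin (I + J)), p η (pd (I+J) σ φ) * q η (sh I (pd (I+J) σ φ)) := rfl

lemma fAux_zero (K : ℤ) (η : ℝ) (φ : ℕ → ℝ) : fAux 0 K η φ = 0 := rfl

lemma fAux_one (K : ℤ) (η : ℝ) (φ : ℕ → ℝ) :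
    fAux 1 K η φ = if K = 0 then -η⁻¹ else if K = 1 then η⁻¹ else 0 := rfl

lemma fAux_eq_zero {J : ℕ} {K : ℤ} (η : ℝ) (φ : ℕ → ℝ)
    (h : J = 0 ∨ K < 0 ∨ (J : ℤ) < K) : fAux J K η φ = 0 := by
  match J with
  | 0 => rfl
  | 1 =>
    rw [fAux_one]
    rcases h with h | h | h
    · omega
    · rw [if_neg (by omega), if_neg (by omega)]
    · rw [if_neg (by omega), if_neg (by omega)]
  | (J+2) =>
    show (if 0 ≤ K ∧ K ≤ (J : ℤ) + 2 then _ else 0) = 0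
    rcases h with h | h | h
    · omega
    · rw [if_neg (by omega)]
    · rw [if_neg (by push_cast at h; omega)]

lemma fAux_support {J : ℕ} {K : ℤ} {η : ℝ} {φ : ℕ → ℝ} (h : fAux J K η φ ≠ 0) :
    1 ≤ J ∧ 0 ≤ K ∧ K ≤ (J : ℤ) := by
  by_contra hc
  push_neg at hc
  apply h
  apply fAux_eq_zero
  by_cases h1 : 1 ≤ J
  · by_cases h2 : 0 ≤ K
    · right; right; exact hc h1 h2
    · right; left; omega
  · left; omega
lemma gAux_eq (J : ℕ) (K : ℤ) (η : ℝ) (φ : ℕ → ℝ) :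
    gAux J K η φ =
      (-2 * (K : ℝ)) / ((K : ℝ) * η - ∑ i ∈ Finset.range J, φ i) * fAux J K η φ := rfl

lemma fAux_congr {J : ℕ} {K : ℤ} {η : ℝ} {φ ψ : ℕ → ℝ} (h : ∀ i < J, φ i = ψ i) :
    fAux J K η φ = fAux J K η ψ := by
  induction J using Nat.strong_induction_on generalizing K φ ψ with
  | _ J ih =>
    match J with
    | 0 => rfl
    | 1 => rfl
    | (J+2) =>
      show (if _ then _ else (0:ℝ)) = (if _ then _ else (0:ℝ))
      split
      · congr 1
        apply Finset.sum_congr rfl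
        intro a _
        congr 1
        congr 1
        apply Finset.sum_congr rfl
        intro σ _
        simp only
        have harg : ∀ i < J+1,
            (fun i => if h : i < J+2 then φ (σ ⟨i, h⟩) else φ i) i =
            (fun i => if h : i < J+2 then ψ (σ ⟨i, h⟩) else ψ i) i := by
          intro i hi
          simp only [dif_pos (by omega : i < J+2)]
          exact h _ (σ ⟨i, by omega⟩).2
        congr 1
        · congr 2
          apply Finset.sum_congr rfl
          intro i hi
          exact harg i (Finset.mem_range.mp hi)
        · exact ih (J+1) (by omega) harg
      · rfl

lemma gAux_congr {J : ℕ} {K : ℤ} {η : ℝ} {φ ψ : ℕ → ℝ} (h : ∀ i < J, φ i = ψ i) :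
    gAux J K η φ = gAux J K η ψ := by
  rw [gAux_eq, gAux_eq, fAux_congr h]
  congr 3
  exact Finset.sum_congr rfl fun i hi => h i (Finset.mem_range.mp hi)

lemma gAux_zeroJ (K : ℤ) (η : ℝ) (φ : ℕ → ℝ) : gAux 0 K η φ = 0 := by
  rw [gAux_eq, fAux_zero, mul_zero]

lemma gAux_zeroK (J : ℕ) (η : ℝ) (φ : ℕ → ℝ) : gAux J 0 η φ = 0 := by
  rw [gAux_eq]
  norm_num

lemma gAux_eq_zero {J : ℕ} {K : ℤ} (η : ℝ) (φ : ℕ → ℝ)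
    (h : J = 0 ∨ K < 0 ∨ (J : ℤ) < K) : gAux J K η φ = 0 := by
  rw [gAux_eq, fAux_eq_zero η φ h, mul_zero]

/-- recursion, valid for every `K` -/
lemma fAux_rec (N : ℕ) (K : ℤ) (η : ℝ) (φ : ℕ → ℝ) :
    fAux (N+2) K η φ =
      η⁻¹ * ∑ a ∈ ({-1, 0, 1} : Finset ℤ), omegaCoef a *
        ((Nat.factorial (N+2) : ℝ)⁻¹ *
          ∑ σ : Equiv.Perm (Fin (N+2)), gAux (N+1) (K+a) η (pd (N+2) σ φ)) := by
  show (if 0 ≤ K ∧ K ≤ (N : ℤ) + 2 then _ else (0:ℝ)) = _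
  split
  · rfl
  · next hc =>
    have : ∀ a ∈ ({-1, 0, 1} : Finset ℤ), omegaCoef a *
        ((Nat.factorial (N+2) : ℝ)⁻¹ *
          ∑ σ : Equiv.Perm (Fin (N+2)), gAux (N+1) (K+a) η (pd (N+2) σ φ)) = 0 := by
      intro a ha
      have h2 : ∀ σ : Equiv.Perm (Fin (N+2)), gAux (N+1) (K+a) η (pd (N+2) σ φ) = 0 := by
        intro σ
        rcases eq_or_ne (K+a) 0 with h | h
        · rw [h, gAux_zeroK]
        · apply gAux_eq_zero
          right
          simp only [Finset.mem_insert, Finset.mem_singleton] at ha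
          rcases ha with rfl | rfl | rfl <;> push_cast <;> omega
      rw [Finset.sum_congr rfl (fun σ _ => h2 σ), Finset.sum_const, smul_zero,
        mul_zero, mul_zero]
    rw [Finset.sum_congr rfl this, Finset.sum_const, smul_zero, mul_zero]
/-- extension of a permutation of `Fin j` to `Fin n` fixing `[j,n)` -/
def extPerm {j n : ℕ} (h : j ≤ n) (τ : Equiv.Perm (Fin j)) : Equiv.Perm (Fin n) :=
  τ.extendDomain (p := fun x : Fin n => (x : ℕ) < j)
    { toFun := fun i => ⟨⟨i, lt_of_lt_of_le i.2 h⟩, i.2⟩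
      invFun := fun x => ⟨(x.1 : ℕ), x.2⟩
      left_inv := fun i => rfl
      right_inv := fun x => rfl }

lemma extPerm_lt {j n : ℕ} (h : j ≤ n) (τ : Equiv.Perm (Fin j)) {i : ℕ} (hi : i < j) :
    extPerm h τ ⟨i, lt_of_lt_of_le hi h⟩ = ⟨(τ ⟨i, hi⟩ : ℕ), lt_of_lt_of_le (τ ⟨i, hi⟩).2 h⟩ := by
  have := Equiv.Perm.extendDomain_apply_subtype τ
    (p := fun x : Fin n => (x : ℕ) < j)
    ({ toFun := fun i => ⟨⟨i, lt_of_lt_of_le i.2 h⟩, i.2⟩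
       invFun := fun x => ⟨(x.1 : ℕ), x.2⟩
       left_inv := fun i => rfl
       right_inv := fun x => rfl } : Fin j ≃ {x : Fin n // (x : ℕ) < j})
    (b := ⟨i, lt_of_lt_of_le hi h⟩) hi
  exact this

lemma extPerm_ge {j n : ℕ} (h : j ≤ n) (τ : Equiv.Perm (Fin j)) {x : Fin n}
    (hx : ¬ (x : ℕ) < j) : extPerm h τ x = x :=
  Equiv.Perm.extendDomain_apply_not_subtype τ _ hx

lemma pd_pd {j n : ℕ} (h : j ≤ n) (τ : Equiv.Perm (Fin j)) (σ : Equiv.Perm (Fin n))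
    (φ : ℕ → ℝ) : pd j τ (pd n σ φ) = pd n (σ * extPerm h τ) φ := by
  funext i
  by_cases hij : i < j
  · have hin : i < n := lt_of_lt_of_le hij h
    simp only [pd, dif_pos hij, dif_pos hin]
    have h1 : (τ ⟨i, hij⟩ : ℕ) < n := lt_of_lt_of_le (τ ⟨i, hij⟩).2 h
    rw [dif_pos h1]
    congr 1
    rw [Equiv.Perm.mul_apply]
    congr 1
    rw [extPerm_lt h τ hij]
  · by_cases hin : i < n
    · simp only [pd, dif_neg hij, dif_pos hin]
      congr 2
      rw [Equiv.Perm.mul_apply, extPerm_ge h τ (by exact hij)]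
    · simp only [pd, dif_neg hij, dif_neg hin]

lemma pd_pd_full {n : ℕ} (τ σ : Equiv.Perm (Fin n)) (φ : ℕ → ℝ) :
    pd n τ (pd n σ φ) = pd n (σ * τ) φ := by
  funext i
  by_cases hin : i < n
  · simp only [pd, dif_pos hin, dif_pos (Fin.is_lt _)]
    rfl
  · simp only [pd, dif_neg hin]

/-- reindexing a sum over the permutation group by right multiplication -/
lemma sum_perm_mulRight {n : ℕ} (ρ : Equiv.Perm (Fin n)) (G : Equiv.Perm (Fin n) → ℝ) :
    ∑ σ : Equiv.Perm (Fin n), G (σ * ρ) = ∑ σ : Equiv.Perm (Fin n), G σ :=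
  Equiv.sum_comp (Equiv.mulRight ρ) G

lemma sum_perm_mulLeft {n : ℕ} (ρ : Equiv.Perm (Fin n)) (G : Equiv.Perm (Fin n) → ℝ) :
    ∑ σ : Equiv.Perm (Fin n), G (ρ * σ) = ∑ σ : Equiv.Perm (Fin n), G σ :=
  Equiv.sum_comp (Equiv.mulLeft ρ) G

/-- absorbing an inner permutation sum -/
lemma abs_sum {j n : ℕ} (h : j ≤ n) (φ : ℕ → ℝ) (F : (ℕ → ℝ) → ℝ) :
    ∑ τ : Equiv.Perm (Fin j), ∑ σ : Equiv.Perm (Fin n), F (pd j τ (pd n σ φ)) =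
      (Nat.factorial j : ℝ) * ∑ σ : Equiv.Perm (Fin n), F (pd n σ φ) := by
  have h1 : ∀ τ : Equiv.Perm (Fin j),
      ∑ σ : Equiv.Perm (Fin n), F (pd j τ (pd n σ φ)) =
      ∑ σ : Equiv.Perm (Fin n), F (pd n σ φ) := by
    intro τ
    calc ∑ σ : Equiv.Perm (Fin n), F (pd j τ (pd n σ φ))
        = ∑ σ : Equiv.Perm (Fin n), F (pd n (σ * extPerm h τ) φ) := by
          apply Finset.sum_congr rfl; intro σ _; rw [pd_pd h]
      _ = ∑ σ : Equiv.Perm (Fin n), F (pd n σ φ) :=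
          sum_perm_mulRight (extPerm h τ) (fun σ => F (pd n σ φ))
  rw [Finset.sum_congr rfl (fun τ _ => h1 τ), Finset.sum_const, nsmul_eq_mul]
  congr 2
  simp [Fintype.card_perm, Fintype.card_fin]

set_option maxHeartbeats 1000000 in
lemma fAux_pd {n : ℕ} (K : ℤ) (η : ℝ) (σ : Equiv.Perm (Fin n)) (φ : ℕ → ℝ) :
    fAux n K η (pd n σ φ) = fAux n K η φ := by
  match n with
  | 0 => rfl
  | 1 => rfl
  | (N+2) =>
    rw [fAux_rec, fAux_rec]
    congr 1
    apply Finset.sum_congr rfl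
    intro a _
    congr 2
    calc ∑ τ : Equiv.Perm (Fin (N+2)), gAux (N+1) (K+a) η (pd (N+2) τ (pd (N+2) σ φ))
        = ∑ τ : Equiv.Perm (Fin (N+2)), gAux (N+1) (K+a) η (pd (N+2) (σ * τ) φ) := by
          apply Finset.sum_congr rfl; intro τ _; rw [pd_pd_full]
      _ = _ := sum_perm_mulLeft σ (fun τ => gAux (N+1) (K+a) η (pd (N+2) τ φ))

/-- sum of first `t` permuted-truncated values as a `Fin` sum -/
lemma sum_pd {t n : ℕ} (h : t ≤ n) (σ : Equiv.Perm (Fin n)) (φ : ℕ → ℝ) :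
    ∑ i ∈ Finset.range t, pd n σ φ i = ∑ i : Fin t, φ (σ (Fin.castLE h i)) := by
  rw [Finset.sum_range]
  apply Finset.sum_congr rfl
  intro i _
  simp only [pd, dif_pos (lt_of_lt_of_le i.2 h)]
  rfl

lemma sum_sh_pd {j m n : ℕ} (h : j + m ≤ n) (σ : Equiv.Perm (Fin n)) (φ : ℕ → ℝ) :
    ∑ i ∈ Finset.range m, sh j (pd n σ φ) i =
      ∑ i : Fin m, φ (σ ⟨j + (i : ℕ), by omega⟩) := by
  rw [Finset.sum_range]
  apply Finset.sum_congr rfl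
  intro i _
  have hi : (i : ℕ) + j < n := by omega
  simp only [sh, pd, dif_pos hi]
  have : (⟨(i : ℕ) + j, hi⟩ : Fin n) = ⟨j + (i : ℕ), by omega⟩ := by
    rw [Fin.mk_eq_mk]; omega
  rw [this]

lemma sum_pd_full {n : ℕ} (σ : Equiv.Perm (Fin n)) (φ : ℕ → ℝ) :
    ∑ i ∈ Finset.range n, pd n σ φ i = ∑ i ∈ Finset.range n, φ i := by
  rw [sum_pd (le_refl n), Finset.sum_range]
  have : ∀ i : Fin n, Fin.castLE (le_refl n) i = i := fun i => rfl
  calc ∑ i : Fin n, φ (σ (Fin.castLE (le_refl n) i)) = ∑ i : Fin n, φ (σ i) := rfl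
    _ = ∑ i : Fin n, φ i := Equiv.sum_comp σ (fun i : Fin n => φ (i : ℕ))

lemma sum_split {j m : ℕ} (ψ : ℕ → ℝ) :
    ∑ i ∈ Finset.range (j + m), ψ i =
      ∑ i ∈ Finset.range j, ψ i + ∑ i ∈ Finset.range m, sh j ψ i := by
  induction m with
  | zero => simp [sh]
  | succ m ih =>
    rw [show j + (m+1) = (j+m)+1 by omega, Finset.sum_range_succ, ih,
      Finset.sum_range_succ]
    simp only [sh]
    rw [Nat.add_comm j m]
    ring

lemma sh_pd_same {j : ℕ} (τ : Equiv.Perm (Fin j)) (ψ : ℕ → ℝ) :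
    sh j (pd j τ ψ) = sh j ψ := by
  funext i
  simp only [sh, pd, dif_neg (by omega : ¬ i + j < j)]
/-- non-resonance condition -/
def Res (n : ℕ) (η : ℝ) (φ : ℕ → ℝ) : Prop :=
  ∀ K' J' : ℕ, 1 ≤ K' → K' ≤ J' → J' ≤ n →
    ∀ ι : Fin J' → Fin n, Function.Injective ι →
      (K' : ℝ) * η ≠ ∑ i, φ (ι i : ℕ)

lemma Res_pd {n m : ℕ} {η : ℝ} {φ : ℕ → ℝ} (hres : Res n η φ) (hm : m ≤ n)
    (σ : Equiv.Perm (Fin n)) : Res m η (pd n σ φ) := by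
  intro K' J' h1 h2 h3 ι hι
  have hcomp : Function.Injective (fun i => σ (Fin.castLE hm (ι i))) := by
    intro a b hab
    exact hι (Fin.castLE_injective _ (σ.injective hab))
  have := hres K' J' h1 h2 (le_trans h3 hm) _ hcomp
  convert this using 2
  rename_i i hi
  simp only [pd, dif_pos (lt_of_lt_of_le (ι i).2 hm)]
  rfl

/-- nonvanishing of the denominator for an initial block -/
lemma res_block {n t k : ℕ} {η : ℝ} {φ : ℕ → ℝ} (hres : Res n η φ)
    (hk : 1 ≤ k) (hkt : k ≤ t) (htn : t ≤ n) (σ : Equiv.Perm (Fin n)) :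
    ((k : ℤ) : ℝ) * η - ∑ i ∈ Finset.range t, pd n σ φ i ≠ 0 := by
  rw [sum_pd htn σ φ]
  intro hc
  exact hres k t hk hkt htn (fun i => σ (Fin.castLE htn i))
    (fun a b hab => Fin.castLE_injective _ (σ.injective hab))
    (by push_cast at hc ⊢; linarith)

/-- nonvanishing of the denominator for a shifted block -/
lemma res_block_sh {n j m l : ℕ} {η : ℝ} {φ : ℕ → ℝ} (hres : Res n η φ)
    (hl : 1 ≤ l) (hlm : l ≤ m) (hjm : j + m ≤ n) (σ : Equiv.Perm (Fin n)) :
    ((l : ℤ) : ℝ) * η - ∑ i ∈ Finset.range m, sh j (pd n σ φ) i ≠ 0 := by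
  rw [sum_sh_pd hjm σ φ]
  intro hc
  have hemb : Function.Injective (fun i : Fin m => σ ⟨j + (i : ℕ), by omega⟩) := by
    intro a b hab
    have := σ.injective hab
    rw [Fin.mk_eq_mk] at this
    exact Fin.ext (by omega)
  exact hres l m hl hlm (by omega) (fun i : Fin m => σ ⟨j + (i : ℕ), by omega⟩) hemb
    (by push_cast at hc ⊢; linarith)

/-- nonvanishing of the full denominator -/
lemma res_full {n c : ℕ} {η : ℝ} {φ : ℕ → ℝ} (hres : Res n η φ)
    (hc1 : 1 ≤ c) (hcn : c ≤ n) :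
    ((c : ℤ) : ℝ) * η - ∑ i ∈ Finset.range n, φ i ≠ 0 := by
  rw [Finset.sum_range fun i => φ i]
  intro hc
  exact hres c n hc1 hcn (le_refl n) (fun i => i) (fun a b hab => hab)
    (by push_cast at hc ⊢; linarith)
/-- the cycle fixing `[0, j-1)`, sending `i ↦ i+1` on `[j-1, n-1)` and `n-1 ↦ j-1` -/
def dPerm (n j : ℕ) (hj : 1 ≤ j) (hjn : j ≤ n) : Equiv.Perm (Fin n) where
  toFun x := if (x : ℕ) < j - 1 then x
    else if h2 : (x : ℕ) = n - 1 then ⟨j - 1, by omega⟩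
    else ⟨(x : ℕ) + 1, by have := x.2; omega⟩
  invFun y := if (y : ℕ) < j - 1 then y
    else if h2 : (y : ℕ) = j - 1 then ⟨n - 1, by have := y.2; omega⟩
    else ⟨(y : ℕ) - 1, by have := y.2; omega⟩
  left_inv := by
    intro x
    have hx := x.2
    apply Fin.ext
    by_cases h1 : (x : ℕ) < j - 1
    · simp only [if_pos h1]
    · by_cases h2 : (x : ℕ) = n - 1
      · simp only [if_neg h1, dif_pos h2, if_neg (by omega : ¬ (j-1 : ℕ) < j - 1),
          dif_pos rfl, dite_true]
        omega
      · simp only [if_neg h1, dif_neg h2, if_neg (show ¬ (x:ℕ)+1 < j - 1 by omega),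
          dif_neg (show (x:ℕ)+1 ≠ j - 1 by omega)]
        omega
  right_inv := by
    intro y
    have hy := y.2
    apply Fin.ext
    by_cases h1 : (y : ℕ) < j - 1
    · simp only [if_pos h1]
    · by_cases h2 : (y : ℕ) = j - 1
      · simp only [if_neg h1, dif_pos h2, if_neg (show ¬ (n:ℕ)-1 < j - 1 by omega),
          dif_pos rfl, dite_true]
        omega
      · simp only [if_neg h1, dif_neg h2, if_neg (show ¬ (y:ℕ)-1 < j - 1 by omega),
          dif_neg (show (y:ℕ)-1 ≠ n - 1 by omega)]
        omega

lemma dPerm_lt {n j : ℕ} (hj : 1 ≤ j) (hjn : j ≤ n) {i : ℕ} (hi : i < n)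
    (h : i < j - 1) : dPerm n j hj hjn ⟨i, hi⟩ = ⟨i, hi⟩ := by
  show (if _ then _ else _) = _
  rw [if_pos h]

lemma dPerm_mid {n j : ℕ} (hj : 1 ≤ j) (hjn : j ≤ n) {i : ℕ} (hi : i < n)
    (h1 : ¬ i < j - 1) (h2 : i ≠ n - 1) :
    dPerm n j hj hjn ⟨i, hi⟩ = ⟨i + 1, by omega⟩ := by
  show (if _ then _ else _) = _
  rw [if_neg h1, dif_neg h2]

lemma dPerm_last {n j : ℕ} (hj : 1 ≤ j) (hjn : j ≤ n) (h1 : ¬ n - 1 < j - 1)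
    (hi : n - 1 < n) :
    dPerm n j hj hjn ⟨n - 1, hi⟩ = ⟨j - 1, by omega⟩ := by
  show (if _ then _ else _) = _
  rw [if_neg h1, dif_pos rfl]

/-- shifting the second block left by one across the unused slot `j-1` -/
lemma shift_sum {n j m : ℕ} (hj : 1 ≤ j) (hjm : j + m = n) (L : ℤ) (η : ℝ) (φ : ℕ → ℝ)
    (A : (ℕ → ℝ) → ℝ) (hA : ∀ ρ ρ' : ℕ → ℝ, (∀ i < j - 1, ρ i = ρ' i) → A ρ = A ρ') :
    ∑ σ : Equiv.Perm (Fin n), A (pd n σ φ) * gAux m L η (sh j (pd n σ φ)) =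
    ∑ σ : Equiv.Perm (Fin n), A (pd n σ φ) * gAux m L η (sh (j-1) (pd n σ φ)) := by
  have hjn : j ≤ n := by omega
  have key : ∀ σ : Equiv.Perm (Fin n),
      A (pd n (σ * dPerm n j hj hjn) φ) * gAux m L η (sh (j-1) (pd n (σ * dPerm n j hj hjn) φ))
      = A (pd n σ φ) * gAux m L η (sh j (pd n σ φ)) := by
    intro σ
    congr 1
    · apply hA
      intro i hi
      simp only [pd, dif_pos (by omega : i < n)]
      congr 2
      rw [Equiv.Perm.mul_apply, dPerm_lt hj hjn _ hi]
    · apply gAux_congr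
      intro i hi
      have h1 : i + (j-1) < n := by omega
      have h2 : i + j < n := by omega
      simp only [sh, pd, dif_pos h1, dif_pos h2]
      have harg : (σ * dPerm n j hj hjn) ⟨i + (j-1), h1⟩ = σ ⟨i + j, h2⟩ := by
        rw [Equiv.Perm.mul_apply, dPerm_mid hj hjn h1 (by omega) (by omega)]
        congr 1
        rw [Fin.mk_eq_mk]
        omega
      rw [harg]
  calc ∑ σ : Equiv.Perm (Fin n), A (pd n σ φ) * gAux m L η (sh j (pd n σ φ))
      = ∑ σ : Equiv.Perm (Fin n),
          A (pd n (σ * dPerm n j hj hjn) φ) *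
            gAux m L η (sh (j-1) (pd n (σ * dPerm n j hj hjn) φ)) := by
        apply Finset.sum_congr rfl; intro σ _; rw [key σ]
    _ = _ := sum_perm_mulRight (dPerm n j hj hjn)
          (fun σ => A (pd n σ φ) * gAux m L η (sh (j-1) (pd n σ φ)))
/-- value form of `finAddFlip` -/
lemma finAddFlip_val {m n : ℕ} (x : Fin (m + n)) :
    ((finAddFlip x : Fin (n + m)) : ℕ) =
      if (x : ℕ) < m then n + (x : ℕ) else (x : ℕ) - m := by
  rcases x with ⟨v, hv⟩
  by_cases h : v < m
  · rw [finAddFlip_apply_mk_left h (by omega) (by omega), if_pos h]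
  · rw [finAddFlip_apply_mk_right (by omega) (by omega), if_neg h]

/-- commutativity of the symmetric product, for functions reading only their own block -/
lemma symProd_comm (I J : ℕ) (p q : ℝ → (ℕ → ℝ) → ℝ) (η : ℝ) (φ : ℕ → ℝ)
    (hp : ∀ ρ ρ' : ℕ → ℝ, (∀ i < I, ρ i = ρ' i) → p η ρ = p η ρ')
    (hq : ∀ ρ ρ' : ℕ → ℝ, (∀ i < J, ρ i = ρ' i) → q η ρ = q η ρ') :
    symProd I J p q η φ = symProd J I q p η φ := by
  rw [symProd_eq, symProd_eq]
  have hfac : ((I + J).factorial : ℝ) = ((J + I).factorial : ℝ) := by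
    rw [Nat.add_comm]
  rw [hfac]
  congr 1
  -- reindex sums
  have hIJ : J + I = I + J := Nat.add_comm J I
  let E : Equiv.Perm (Fin (J + I)) → Equiv.Perm (Fin (I + J)) :=
    fun σ' => (finAddFlip.trans σ').trans (finCongr hIJ)
  have hbij : Function.Bijective E := by
    constructor
    · intro a b hab
      ext x
      have h1 : Fin.cast hIJ (a x) = Fin.cast hIJ (b x) := by
        have := congrArg (fun (σ : Equiv.Perm (Fin (I+J))) => σ (finAddFlip.symm x)) hab
        simpa [E, Equiv.trans_apply] using this
      have h2 := congrArg Fin.val h1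
      simpa [Fin.coe_cast] using h2
    · intro σ
      refine ⟨(finAddFlip.symm.trans σ).trans (finCongr hIJ.symm), ?_⟩
      ext x
      simp [E, Equiv.trans_apply]
  rw [← Function.Bijective.sum_comp hbij
    (fun σ => p η (pd (I+J) σ φ) * q η (sh I (pd (I+J) σ φ)))]
  apply Finset.sum_congr rfl
  intro σ' _
  have hval : ∀ x : Fin (I + J), ((E σ' x : Fin (I+J)) : ℕ) = (σ' (finAddFlip x) : ℕ) := by
    intro x
    simp [E, Equiv.trans_apply]
  rw [mul_comm]
  congr 1
  · apply hq
    intro i hi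
    -- sh I (pd (I+J) (E σ') φ) i = pd (J+I) σ' φ i  for i < J
    have h1 : i + I < I + J := by omega
    have h2 : i < J + I := by omega
    simp only [sh, pd, dif_pos h1, dif_pos h2]
    congr 1
    rw [hval ⟨i + I, h1⟩]
    congr 2
    apply Fin.ext
    rw [finAddFlip_val]
    simp only [if_neg (by omega : ¬ i + I < I)]
    omega
  · apply hp
    intro i hi
    have h1 : i < I + J := by omega
    have h2 : i + J < J + I := by omega
    simp only [sh, pd, dif_pos h1, dif_pos h2]
    congr 1
    rw [hval ⟨i, h1⟩]
    congr 2
    apply Fin.ext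
    rw [finAddFlip_val]
    simp only [if_pos (by omega : i < I)]
    omega
/-- partial fraction step -/
lemma Astep (j m k l : ℕ) (hk : 1 ≤ k) (hl : 1 ≤ l) (η : ℝ) (hη : η ≠ 0)
    (φ : ℕ → ℝ) (hres : Res (j+m) η φ) :
    symProd j m (gAux j (k:ℤ)) (gAux m (l:ℤ)) η φ =
      (-2) * (((k:ℝ) + (l:ℝ)) * η - ∑ i ∈ Finset.range (j+m), φ i)⁻¹ *
        ((l : ℝ) * symProd j m (gAux j (k:ℤ)) (fAux m (l:ℤ)) η φ
         + (k : ℝ) * symProd j m (fAux j (k:ℤ)) (gAux m (l:ℤ)) η φ) := by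
  rw [symProd_eq, symProd_eq, symProd_eq]
  set n := j + m with hn
  set c := ((n.factorial : ℝ))⁻¹ with hc
  set D := ((k:ℝ) + (l:ℝ)) * η - ∑ i ∈ Finset.range n, φ i with hD
  have key : ∀ σ : Equiv.Perm (Fin n),
      gAux j (k:ℤ) η (pd n σ φ) * gAux m (l:ℤ) η (sh j (pd n σ φ)) =
      (-2) * D⁻¹ *
        ((l:ℝ) * (gAux j (k:ℤ) η (pd n σ φ) * fAux m (l:ℤ) η (sh j (pd n σ φ)))
         + (k:ℝ) * (fAux j (k:ℤ) η (pd n σ φ) * gAux m (l:ℤ) η (sh j (pd n σ φ)))) := by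
    intro σ
    by_cases hfa : fAux j (k:ℤ) η (pd n σ φ) = 0
    · rw [gAux_eq, hfa]
      ring
    by_cases hfb : fAux m (l:ℤ) η (sh j (pd n σ φ)) = 0
    · rw [gAux_eq (J := m), hfb]
      rw [gAux_eq (J := j)]
      ring
    have hja := fAux_support hfa
    have hjb := fAux_support hfb
    have hkj : k ≤ j := by exact_mod_cast hja.2.2
    have hlm : l ≤ m := by exact_mod_cast hjb.2.2
    have hDa := res_block hres hk hkj (by omega) σ
    have hDb := res_block_sh hres hl hlm (le_refl n) σ
    have hDfull := res_full hres (by omega : 1 ≤ k + l) (by omega : k + l ≤ n)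
    have hsum : (((k:ℤ):ℝ) * η - ∑ i ∈ Finset.range j, pd n σ φ i)
        + (((l:ℤ):ℝ) * η - ∑ i ∈ Finset.range m, sh j (pd n σ φ) i) = D := by
      have h1 : ∑ i ∈ Finset.range j, pd n σ φ i
          + ∑ i ∈ Finset.range m, sh j (pd n σ φ) i = ∑ i ∈ Finset.range n, φ i := by
        rw [← sum_split]
        exact sum_pd_full σ φ
      rw [hD]
      push_cast
      linarith [h1]
    have hD0 : D ≠ 0 := by
      rw [hD]
      have := hDfull
      push_cast at this ⊢
      convert this using 2
    rw [gAux_eq (J := j), gAux_eq (J := m)]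
    set Da := ((k:ℤ):ℝ) * η - ∑ i ∈ Finset.range j, pd n σ φ i with hDa'
    set Db := ((l:ℤ):ℝ) * η - ∑ i ∈ Finset.range m, sh j (pd n σ φ) i with hDb'
    set x := fAux j (k:ℤ) η (pd n σ φ)
    set y := fAux m (l:ℤ) η (sh j (pd n σ φ))
    have hD0' : Da + Db ≠ 0 := by rw [hsum]; exact hD0
    rw [← hsum]
    have hkr : ((k:ℤ):ℝ) = (k:ℝ) := by push_cast; ring
    have hlr : ((l:ℤ):ℝ) = (l:ℝ) := by push_cast; ring
    rw [hkr, hlr]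
    field_simp [hDa, hDb, hD0']
    ring
  calc c * ∑ σ : Equiv.Perm (Fin n),
        gAux j (k:ℤ) η (pd n σ φ) * gAux m (l:ℤ) η (sh j (pd n σ φ))
      = c * ∑ σ : Equiv.Perm (Fin n), (-2) * D⁻¹ *
          ((l:ℝ) * (gAux j (k:ℤ) η (pd n σ φ) * fAux m (l:ℤ) η (sh j (pd n σ φ)))
           + (k:ℝ) * (fAux j (k:ℤ) η (pd n σ φ) * gAux m (l:ℤ) η (sh j (pd n σ φ)))) := by
        rw [Finset.sum_congr rfl (fun σ _ => key σ)]
    _ = (-2) * D⁻¹ *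
        ((l:ℝ) * (c * ∑ σ : Equiv.Perm (Fin n),
            gAux j (k:ℤ) η (pd n σ φ) * fAux m (l:ℤ) η (sh j (pd n σ φ)))
         + (k:ℝ) * (c * ∑ σ : Equiv.Perm (Fin n),
            fAux j (k:ℤ) η (pd n σ φ) * gAux m (l:ℤ) η (sh j (pd n σ φ)))) := by
        rw [← Finset.mul_sum, Finset.sum_add_distrib, ← Finset.mul_sum, ← Finset.mul_sum]
        ring
/-- expansion of one term of the RHS sum via the recursion -/
lemma Rstep (j m k : ℕ) (hk : 1 ≤ k) (L : ℤ) (η : ℝ) (hη : η ≠ 0) (φ : ℕ → ℝ) :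
    symProd j m (fAux j (k:ℤ)) (gAux m L) η φ =
      η⁻¹ * (((j+m).factorial : ℝ))⁻¹ *
        ∑ a ∈ ({-1,0,1} : Finset ℤ), omegaCoef a *
          ∑ σ : Equiv.Perm (Fin (j+m)),
            gAux (j-1) ((k:ℤ)+a) η (pd (j+m) σ φ) *
              gAux m L η (sh (j-1) (pd (j+m) σ φ))
      + (if j = 1 ∧ k = 1 then
          η⁻¹ * (((j+m).factorial : ℝ))⁻¹ *
            ∑ σ : Equiv.Perm (Fin (j+m)), gAux m L η (pd (j+m) σ φ)
        else 0) := by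
  match j with
  | 0 =>
    rw [symProd_eq]
    simp only [show (0:ℕ) - 1 = 0 from rfl, gAux_zeroJ, zero_mul, mul_zero,
      Finset.sum_const_zero, fAux_zero]
    norm_num
  | 1 =>
    rw [symProd_eq]
    by_cases hk1 : k = 1
    · subst hk1
      have hf1 : ∀ ψ : ℕ → ℝ, fAux 1 ((1:ℕ):ℤ) η ψ = η⁻¹ := by
        intro ψ
        rw [fAux_one]
        norm_num
      rw [if_pos ⟨rfl, rfl⟩]
      have hz : ∑ a ∈ ({-1,0,1} : Finset ℤ), omegaCoef a *
          ∑ σ : Equiv.Perm (Fin (1+m)),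
            gAux ((1:ℕ)-1) (((1:ℕ):ℤ)+a) η (pd (1+m) σ φ) *
              gAux m L η (sh ((1:ℕ)-1) (pd (1+m) σ φ)) = 0 := by
        apply Finset.sum_eq_zero
        intro a _
        rw [Finset.sum_eq_zero, mul_zero]
        intro σ _
        rw [show (1:ℕ)-1 = 0 from rfl, gAux_zeroJ, zero_mul]
      rw [hz, mul_zero, zero_add]
      have hshift := shift_sum (n := 1+m) (j := 1) (m := m) (le_refl 1) rfl L η φ
        (fun _ => η⁻¹) (fun _ _ _ => rfl)
      have hterm : ∀ σ : Equiv.Perm (Fin (1+m)),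
          fAux 1 ((1:ℕ):ℤ) η (pd (1+m) σ φ) * gAux m L η (sh 1 (pd (1+m) σ φ)) =
          η⁻¹ * gAux m L η (sh 1 (pd (1+m) σ φ)) := by
        intro σ
        rw [hf1]
      rw [Finset.sum_congr rfl (fun σ _ => hterm σ), hshift, ← Finset.mul_sum, ← mul_assoc]
      rw [Finset.sum_congr rfl (fun (σ : Equiv.Perm (Fin (1+m))) _ =>
        congrArg (gAux m L η)
          (funext (fun i => rfl) : sh (1-1) (pd (1+m) σ φ) = pd (1+m) σ φ))]
      ring
    · have hf1 : ∀ ψ : ℕ → ℝ, fAux 1 ((k:ℕ):ℤ) η ψ = 0 := by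
        intro ψ
        rw [fAux_one, if_neg (by exact_mod_cast (by omega : (k:ℤ) ≠ 0)),
          if_neg (by exact_mod_cast (by omega : (k:ℤ) ≠ 1))]
      rw [if_neg (by tauto)]
      have hz : ∑ a ∈ ({-1,0,1} : Finset ℤ), omegaCoef a *
          ∑ σ : Equiv.Perm (Fin (1+m)),
            gAux ((1:ℕ)-1) ((k:ℤ)+a) η (pd (1+m) σ φ) *
              gAux m L η (sh ((1:ℕ)-1) (pd (1+m) σ φ)) = 0 := by
        apply Finset.sum_eq_zero
        intro a _
        rw [Finset.sum_eq_zero, mul_zero]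
        intro σ _
        rw [show (1:ℕ)-1 = 0 from rfl, gAux_zeroJ, zero_mul]
      rw [hz, mul_zero, add_zero,
        Finset.sum_eq_zero (fun (σ : Equiv.Perm (Fin (1+m))) _ => by
          rw [hf1, zero_mul]), mul_zero]
  | (M+2) =>
    rw [if_neg (by omega), add_zero, symProd_eq]
    have hstep1 : ∀ σ : Equiv.Perm (Fin (M+2+m)),
        fAux (M+2) (k:ℤ) η (pd (M+2+m) σ φ) * gAux m L η (sh (M+2) (pd (M+2+m) σ φ)) =
        η⁻¹ * ∑ a ∈ ({-1,0,1} : Finset ℤ), omegaCoef a *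
          (((M+2).factorial : ℝ)⁻¹ *
            ∑ τ : Equiv.Perm (Fin (M+2)),
              gAux (M+1) ((k:ℤ)+a) η (pd (M+2) τ (pd (M+2+m) σ φ)) *
                gAux m L η (sh (M+2) (pd (M+2) τ (pd (M+2+m) σ φ)))) := by
      intro σ
      rw [fAux_rec, mul_assoc]
      congr 1
      rw [Finset.sum_mul]
      apply Finset.sum_congr rfl
      intro a _
      rw [mul_assoc]
      congr 1
      rw [mul_assoc]
      congr 1
      rw [Finset.sum_mul]
      apply Finset.sum_congr rfl
      intro τ _
      rw [sh_pd_same]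
    rw [Finset.sum_congr rfl (fun σ _ => hstep1 σ), ← Finset.mul_sum, ← mul_assoc,
      mul_comm (((M+2+m).factorial : ℝ))⁻¹ η⁻¹, mul_assoc, ← mul_assoc]
    congr 1
    rw [Finset.sum_comm]
    apply Finset.sum_congr rfl
    intro a _
    have habs := abs_sum (j := M+2) (n := M+2+m) (by omega) φ
      (fun ρ => gAux (M+1) ((k:ℤ)+a) η ρ * gAux m L η (sh (M+2) ρ))
    have hshift := shift_sum (n := M+2+m) (j := M+2) (m := m) (by omega) rfl L η φ
      (gAux (M+1) ((k:ℤ)+a) η) (fun ρ ρ' hh => gAux_congr hh)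
    rw [← Finset.mul_sum]
    congr 1
    rw [← Finset.mul_sum, Finset.sum_comm, habs, ← mul_assoc,
      inv_mul_cancel₀ (by positivity : ((M+2).factorial : ℝ) ≠ 0), one_mul, hshift]
    rfl
/-- summing a symmetric product over all permutations collapses the inner sum -/
lemma sum_symProd {n : ℕ} (j m : ℕ) (h : j + m ≤ n) (P Q : ℝ → (ℕ → ℝ) → ℝ)
    (η : ℝ) (φ : ℕ → ℝ) :
    ∑ σ : Equiv.Perm (Fin n), symProd j m P Q η (pd n σ φ)
      = ∑ σ : Equiv.Perm (Fin n), P η (pd n σ φ) * Q η (sh j (pd n σ φ)) := by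
  have habs := abs_sum (j := j+m) (n := n) h φ (fun ρ => P η ρ * Q η (sh j ρ))
  calc ∑ σ : Equiv.Perm (Fin n), symProd j m P Q η (pd n σ φ)
      = ∑ σ : Equiv.Perm (Fin n), ((j+m).factorial : ℝ)⁻¹ *
          ∑ τ : Equiv.Perm (Fin (j+m)),
            P η (pd (j+m) τ (pd n σ φ)) * Q η (sh j (pd (j+m) τ (pd n σ φ))) := by
        apply Finset.sum_congr rfl
        intro σ _
        rw [symProd_eq]
    _ = ((j+m).factorial : ℝ)⁻¹ * ∑ τ : Equiv.Perm (Fin (j+m)),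
          ∑ σ : Equiv.Perm (Fin n),
            P η (pd (j+m) τ (pd n σ φ)) * Q η (sh j (pd (j+m) τ (pd n σ φ))) := by
        rw [← Finset.mul_sum, Finset.sum_comm]
    _ = ((j+m).factorial : ℝ)⁻¹ * (((j+m).factorial : ℝ) *
          ∑ σ : Equiv.Perm (Fin n), P η (pd n σ φ) * Q η (sh j (pd n σ φ))) := by
        rw [← habs]
    _ = ∑ σ : Equiv.Perm (Fin n), P η (pd n σ φ) * Q η (sh j (pd n σ φ)) := by
        rw [← mul_assoc, inv_mul_cancel₀ (by positivity : ((j+m).factorial : ℝ) ≠ 0), one_mul]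

/-- statement A: the convolution identity for the g's -/
def StmtA (n : ℕ) : Prop :=
  ∀ k l : ℕ, 1 ≤ k → 1 ≤ l → ∀ (η : ℝ) (φ : ℕ → ℝ), η ≠ 0 → Res n η φ →
    ∑ p ∈ Finset.HasAntidiagonal.antidiagonal n,
        symProd p.1 p.2 (gAux p.1 (k:ℤ)) (gAux p.2 (l:ℤ)) η φ
      = 2 * gAux n ((k:ℤ)+(l:ℤ)) η φ

/-- statement B: the convolution identity for f in terms of f and g -/
def StmtB (n : ℕ) : Prop :=
  ∀ K k : ℕ, 1 ≤ k → k < K → ∀ (η : ℝ) (φ : ℕ → ℝ), η ≠ 0 → Res n η φ →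
    fAux n (K:ℤ) η φ
      = (1/2) * ∑ p ∈ Finset.HasAntidiagonal.antidiagonal n,
          symProd p.1 p.2 (fAux p.1 (k:ℤ)) (gAux p.2 ((K:ℤ)-(k:ℤ))) η φ

/-- averaged version of statement A over all permutations of `n` variables -/
lemma avg {n : ℕ} (hn : 1 ≤ n) (hA : StmtA (n-1)) (k l : ℕ) (hk : 1 ≤ k) (hl : 1 ≤ l)
    (η : ℝ) (φ : ℕ → ℝ) (hη : η ≠ 0) (hres : Res n η φ) :
    ∑ p ∈ Finset.HasAntidiagonal.antidiagonal (n-1), ∑ σ : Equiv.Perm (Fin n),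
        gAux p.1 (k:ℤ) η (pd n σ φ) * gAux p.2 (l:ℤ) η (sh p.1 (pd n σ φ))
      = 2 * ∑ σ : Equiv.Perm (Fin n), gAux (n-1) ((k:ℤ)+(l:ℤ)) η (pd n σ φ) := by
  have step1 : ∀ p ∈ Finset.HasAntidiagonal.antidiagonal (n-1),
      ∑ σ : Equiv.Perm (Fin n),
          gAux p.1 (k:ℤ) η (pd n σ φ) * gAux p.2 (l:ℤ) η (sh p.1 (pd n σ φ))
        = ∑ σ : Equiv.Perm (Fin n),
            symProd p.1 p.2 (gAux p.1 (k:ℤ)) (gAux p.2 (l:ℤ)) η (pd n σ φ) := by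
    intro p hp
    have hpm : p.1 + p.2 = n - 1 := Finset.HasAntidiagonal.mem_antidiagonal.mp hp
    rw [sum_symProd p.1 p.2 (by omega) _ _ η φ]
  rw [Finset.sum_congr rfl step1, Finset.sum_comm]
  rw [Finset.sum_congr rfl (fun (σ : Equiv.Perm (Fin n)) _ =>
    hA k l hk hl η (pd n σ φ) hη (Res_pd hres (by omega) σ))]
  rw [← Finset.mul_sum]
lemma stepA (n : ℕ) (hB : StmtB n) : StmtA n := by
  intro k l hk hl η φ hη hres
  set D := ((k:ℝ) + (l:ℝ)) * η - ∑ i ∈ Finset.range n, φ i with hD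
  have step1 : ∀ p ∈ Finset.HasAntidiagonal.antidiagonal n,
      symProd p.1 p.2 (gAux p.1 (k:ℤ)) (gAux p.2 (l:ℤ)) η φ =
        (-2) * D⁻¹ *
          ((l:ℝ) * symProd p.1 p.2 (gAux p.1 (k:ℤ)) (fAux p.2 (l:ℤ)) η φ
           + (k:ℝ) * symProd p.1 p.2 (fAux p.1 (k:ℤ)) (gAux p.2 (l:ℤ)) η φ) := by
    intro p hp
    have hpm : p.1 + p.2 = n := Finset.HasAntidiagonal.mem_antidiagonal.mp hp
    have := Astep p.1 p.2 k l hk hl η hη φ (by rw [hpm]; exact hres)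
    rw [this, hD, hpm]
  rw [Finset.sum_congr rfl step1, ← Finset.mul_sum, Finset.sum_add_distrib,
    ← Finset.mul_sum, ← Finset.mul_sum]
  -- second sum: = 2 * fAux n (k+l)
  have hsum2 : ∑ p ∈ Finset.HasAntidiagonal.antidiagonal n,
      symProd p.1 p.2 (fAux p.1 (k:ℤ)) (gAux p.2 (l:ℤ)) η φ
      = 2 * fAux n ((k:ℤ)+(l:ℤ)) η φ := by
    have hb := hB (k+l) k hk (by omega) η φ hη hres
    have hcast : ((k+l : ℕ) : ℤ) - (k:ℤ) = (l:ℤ) := by push_cast; ring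
    rw [hcast] at hb
    have hcast2 : ((k+l : ℕ) : ℤ) = (k:ℤ)+(l:ℤ) := by push_cast; ring
    rw [hcast2] at hb
    rw [hb]
    ring
  -- first sum: commute then use B with split l
  have hsum1 : ∑ p ∈ Finset.HasAntidiagonal.antidiagonal n,
      symProd p.1 p.2 (gAux p.1 (k:ℤ)) (fAux p.2 (l:ℤ)) η φ
      = 2 * fAux n ((k:ℤ)+(l:ℤ)) η φ := by
    have hcomm : ∀ p ∈ Finset.HasAntidiagonal.antidiagonal n,
        symProd p.1 p.2 (gAux p.1 (k:ℤ)) (fAux p.2 (l:ℤ)) η φ =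
        symProd p.2 p.1 (fAux p.2 (l:ℤ)) (gAux p.1 (k:ℤ)) η φ := by
      intro p _
      exact symProd_comm p.1 p.2 _ _ η φ
        (fun ρ ρ' hh => gAux_congr hh) (fun ρ ρ' hh => fAux_congr hh)
    rw [Finset.sum_congr rfl hcomm]
    have hswap := Finset.Nat.sum_antidiagonal_swap
      (n := n) (f := fun q => symProd q.1 q.2 (fAux q.1 (l:ℤ)) (gAux q.2 (k:ℤ)) η φ)
    rw [show (∑ p ∈ Finset.HasAntidiagonal.antidiagonal n,
        symProd p.2 p.1 (fAux p.2 (l:ℤ)) (gAux p.1 (k:ℤ)) η φ)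
      = ∑ p ∈ Finset.HasAntidiagonal.antidiagonal n,
        (fun q => symProd q.1 q.2 (fAux q.1 (l:ℤ)) (gAux q.2 (k:ℤ)) η φ) p.swap from rfl]
    rw [hswap]
    have hb := hB (l+k) l hl (by omega) η φ hη hres
    have hcast : ((l+k : ℕ) : ℤ) - (l:ℤ) = (k:ℤ) := by push_cast; ring
    rw [hcast] at hb
    have hcast2 : ((l+k : ℕ) : ℤ) = (k:ℤ)+(l:ℤ) := by push_cast; ring
    rw [hcast2] at hb
    rw [hb]
    ring
  rw [hsum1, hsum2, gAux_eq]
  have hcast3 : (((k:ℤ)+(l:ℤ) : ℤ) : ℝ) = (k:ℝ)+(l:ℝ) := by push_cast; ring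
  rw [hcast3, ← hD, div_eq_mul_inv]
  ring
lemma omega_neg1 : omegaCoef (-1) = 1/2 := by norm_num [omegaCoef]
lemma omega_zero : omegaCoef 0 = -1 := by norm_num [omegaCoef]
lemma omega_one : omegaCoef 1 = 1/2 := by norm_num [omegaCoef]

lemma sum3 (f : ℤ → ℝ) :
    ∑ a ∈ ({-1,0,1} : Finset ℤ), f a = f (-1) + f 0 + f 1 := by
  rw [show ({-1,0,1} : Finset ℤ) = insert (-1) (insert 0 {1}) from rfl,
    Finset.sum_insert (by decide), Finset.sum_insert (by decide), Finset.sum_singleton]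
  ring

/-- `Rstep` with a stated total -/
lemma Rstep' (j m t : ℕ) (ht : j + m = t) (k : ℕ) (hk : 1 ≤ k) (L : ℤ) (η : ℝ)
    (hη : η ≠ 0) (φ : ℕ → ℝ) :
    symProd j m (fAux j (k:ℤ)) (gAux m L) η φ =
      η⁻¹ * ((t.factorial : ℝ))⁻¹ *
        ∑ a ∈ ({-1,0,1} : Finset ℤ), omegaCoef a *
          ∑ σ : Equiv.Perm (Fin t),
            gAux (j-1) ((k:ℤ)+a) η (pd t σ φ) *
              gAux m L η (sh (j-1) (pd t σ φ))
      + (if j = 1 ∧ k = 1 then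
          η⁻¹ * ((t.factorial : ℝ))⁻¹ *
            ∑ σ : Equiv.Perm (Fin t), gAux m L η (pd t σ φ)
        else 0) := by
  subst ht
  exact Rstep j m k hk L η hη φ

lemma stepB (n : ℕ) (ihA : ∀ m, m < n → StmtA m) : StmtB n := by
  intro K k hk hkK η φ hη hres
  match n, ihA, hres with
  | 0, ihA, hres =>
    rw [fAux_zero, Finset.Nat.antidiagonal_zero, Finset.sum_singleton, symProd_eq,
      Finset.sum_eq_zero (fun (σ : Equiv.Perm (Fin (0+0))) _ => by
        rw [fAux_zero, zero_mul]), mul_zero, mul_zero]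
  | 1, ihA, hres =>
    rw [fAux_eq_zero η φ (by right; right; exact_mod_cast (by omega : (1:ℤ) < (K:ℤ)))]
    rw [Finset.sum_eq_zero, mul_zero]
    intro p hp
    obtain ⟨p1, p2⟩ := p
    have hpm : p1 + p2 = 1 := by simpa using Finset.HasAntidiagonal.mem_antidiagonal.mp hp
    by_cases hp1 : p1 = 0
    · subst hp1
      rw [symProd_eq, Finset.sum_eq_zero (fun (σ : Equiv.Perm (Fin (0+p2))) _ => by
        rw [fAux_zero, zero_mul]), mul_zero]
    · have hp2 : p2 = 0 := by omega
      subst hp2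
      rw [symProd_eq, Finset.sum_eq_zero (fun (σ : Equiv.Perm (Fin (p1+0))) _ => by
        rw [gAux_zeroJ, mul_zero]), mul_zero]
  | (N+2), ihA, hres =>
    have hKk : k ≤ K := le_of_lt hkK
    set l := K - k with hlk
    have hl : 1 ≤ l := by omega
    have hL : (K:ℤ) - (k:ℤ) = ((l : ℕ):ℤ) := by omega
    rw [hL]
    -- expand each term of the RHS
    have step1 : ∑ p ∈ Finset.HasAntidiagonal.antidiagonal (N+2),
        symProd p.1 p.2 (fAux p.1 (k:ℤ)) (gAux p.2 ((l:ℕ):ℤ)) η φ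
      = ∑ p ∈ Finset.HasAntidiagonal.antidiagonal (N+2),
          (η⁻¹ * (((N+2).factorial : ℝ))⁻¹ *
            ∑ a ∈ ({-1,0,1} : Finset ℤ), omegaCoef a *
              ∑ σ : Equiv.Perm (Fin (N+2)),
                gAux (p.1-1) ((k:ℤ)+a) η (pd (N+2) σ φ) *
                  gAux p.2 ((l:ℕ):ℤ) η (sh (p.1-1) (pd (N+2) σ φ))
          + (if p.1 = 1 ∧ k = 1 then
              η⁻¹ * (((N+2).factorial : ℝ))⁻¹ *
                ∑ σ : Equiv.Perm (Fin (N+2)), gAux p.2 ((l:ℕ):ℤ) η (pd (N+2) σ φ)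
            else 0)) := by
      apply Finset.sum_congr rfl
      intro p hp
      exact Rstep' p.1 p.2 (N+2) (Finset.HasAntidiagonal.mem_antidiagonal.mp hp) k hk ((l:ℕ):ℤ) η hη φ
    rw [step1, Finset.sum_add_distrib]
    -- the exceptional term
    have hS2 : ∑ p ∈ Finset.HasAntidiagonal.antidiagonal (N+2),
        (if p.1 = 1 ∧ k = 1 then
          η⁻¹ * (((N+2).factorial : ℝ))⁻¹ *
            ∑ σ : Equiv.Perm (Fin (N+2)), gAux p.2 ((l:ℕ):ℤ) η (pd (N+2) σ φ)
        else 0)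
        = (if k = 1 then
            η⁻¹ * (((N+2).factorial : ℝ))⁻¹ *
              ∑ σ : Equiv.Perm (Fin (N+2)), gAux (N+1) ((l:ℕ):ℤ) η (pd (N+2) σ φ)
          else 0) := by
      by_cases hk1 : k = 1
      · rw [if_pos hk1]
        rw [Finset.sum_eq_single_of_mem (1, N+1)
          (Finset.HasAntidiagonal.mem_antidiagonal.mpr (by omega))]
        · rw [if_pos ⟨rfl, hk1⟩]
        · intro q hq hne
          rw [if_neg]
          rintro ⟨hq1, -⟩
          apply hne
          have hqm : q.1 + q.2 = N+2 := Finset.HasAntidiagonal.mem_antidiagonal.mp hq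
          have : q.2 = N+1 := by omega
          exact Prod.ext hq1 this
      · rw [if_neg hk1]
        exact Finset.sum_eq_zero (fun q _ => by rw [if_neg (by tauto)])
    rw [hS2]
    -- the main sum
    have hmain : ∑ p ∈ Finset.HasAntidiagonal.antidiagonal (N+2),
        η⁻¹ * (((N+2).factorial : ℝ))⁻¹ *
          ∑ a ∈ ({-1,0,1} : Finset ℤ), omegaCoef a *
            ∑ σ : Equiv.Perm (Fin (N+2)),
              gAux (p.1-1) ((k:ℤ)+a) η (pd (N+2) σ φ) *
                gAux p.2 ((l:ℕ):ℤ) η (sh (p.1-1) (pd (N+2) σ φ))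
        = η⁻¹ * (((N+2).factorial : ℝ))⁻¹ *
          ∑ a ∈ ({-1,0,1} : Finset ℤ), omegaCoef a *
            ∑ p ∈ Finset.HasAntidiagonal.antidiagonal (N+1),
              ∑ σ : Equiv.Perm (Fin (N+2)),
                gAux p.1 ((k:ℤ)+a) η (pd (N+2) σ φ) *
                  gAux p.2 ((l:ℕ):ℤ) η (sh p.1 (pd (N+2) σ φ)) := by
      rw [← Finset.mul_sum, Finset.sum_comm]
      congr 1
      apply Finset.sum_congr rfl
      intro a _
      rw [← Finset.mul_sum]
      congr 1
      rw [Finset.Nat.sum_antidiagonal_succ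
        (f := fun p => ∑ σ : Equiv.Perm (Fin (N+2)),
          gAux (p.1-1) ((k:ℤ)+a) η (pd (N+2) σ φ) *
            gAux p.2 ((l:ℕ):ℤ) η (sh (p.1-1) (pd (N+2) σ φ)))]
      rw [Finset.sum_eq_zero (fun (σ : Equiv.Perm (Fin (N+2))) _ => by
        rw [show ((0:ℕ)-1 : ℕ) = 0 from rfl, gAux_zeroJ, zero_mul]), zero_add]
      rfl
    rw [hmain]
    -- now use avg for each a
    have hA := ihA (N+1) (by omega)
    have havg : ∀ (k' : ℕ), 1 ≤ k' →
        ∑ p ∈ Finset.HasAntidiagonal.antidiagonal (N+1), ∑ σ : Equiv.Perm (Fin (N+2)),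
          gAux p.1 ((k':ℕ):ℤ) η (pd (N+2) σ φ) *
            gAux p.2 ((l:ℕ):ℤ) η (sh p.1 (pd (N+2) σ φ))
        = 2 * ∑ σ : Equiv.Perm (Fin (N+2)),
            gAux (N+1) (((k':ℕ):ℤ)+((l:ℕ):ℤ)) η (pd (N+2) σ φ) := by
      intro k' hk'
      exact avg (n := N+2) (by omega) hA k' l hk' hl η φ hη hres
    rw [fAux_rec]
    simp only [sum3, omega_neg1, omega_zero, omega_one]
    -- handle the three a-terms on the RHS
    have h0 : ∑ p ∈ Finset.HasAntidiagonal.antidiagonal (N+1), ∑ σ : Equiv.Perm (Fin (N+2)),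
          gAux p.1 ((k:ℤ)+0) η (pd (N+2) σ φ) *
            gAux p.2 ((l:ℕ):ℤ) η (sh p.1 (pd (N+2) σ φ))
        = 2 * ∑ σ : Equiv.Perm (Fin (N+2)),
            gAux (N+1) ((K:ℤ)+0) η (pd (N+2) σ φ) := by
      have e1 : (k:ℤ)+0 = ((k:ℕ):ℤ) := by ring
      have e2 : ((k:ℕ):ℤ)+((l:ℕ):ℤ) = (K:ℤ)+0 := by omega
      rw [e1, havg k hk, e2]
    have h1 : ∑ p ∈ Finset.HasAntidiagonal.antidiagonal (N+1), ∑ σ : Equiv.Perm (Fin (N+2)),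
          gAux p.1 ((k:ℤ)+1) η (pd (N+2) σ φ) *
            gAux p.2 ((l:ℕ):ℤ) η (sh p.1 (pd (N+2) σ φ))
        = 2 * ∑ σ : Equiv.Perm (Fin (N+2)),
            gAux (N+1) ((K:ℤ)+1) η (pd (N+2) σ φ) := by
      have e1 : (k:ℤ)+1 = (((k+1:ℕ)):ℤ) := by omega
      have e2 : (((k+1:ℕ)):ℤ)+((l:ℕ):ℤ) = (K:ℤ)+1 := by omega
      rw [e1, havg (k+1) (by omega), e2]
    rw [h0, h1]
    by_cases hk1 : k = 1
    · -- a = -1 term vanishes; exceptional term present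
      have hm1 : ∑ p ∈ Finset.HasAntidiagonal.antidiagonal (N+1), ∑ σ : Equiv.Perm (Fin (N+2)),
            gAux p.1 ((k:ℤ)+(-1)) η (pd (N+2) σ φ) *
              gAux p.2 ((l:ℕ):ℤ) η (sh p.1 (pd (N+2) σ φ)) = 0 := by
        apply Finset.sum_eq_zero
        intro p _
        apply Finset.sum_eq_zero
        intro σ _
        rw [show (k:ℤ)+(-1) = 0 by omega, gAux_zeroK, zero_mul]
      rw [hm1, if_pos hk1]
      -- the exceptional g has argument l = K - 1
      have e3 : ((l:ℕ):ℤ) = (K:ℤ)+(-1) := by omega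
      rw [show (∑ σ : Equiv.Perm (Fin (N+2)),
          gAux (N+1) ((l:ℕ):ℤ) η (pd (N+2) σ φ))
        = ∑ σ : Equiv.Perm (Fin (N+2)),
          gAux (N+1) ((K:ℤ)+(-1)) η (pd (N+2) σ φ) from by rw [e3]]
      ring
    · have hk2 : 2 ≤ k := by omega
      have hm1 : ∑ p ∈ Finset.HasAntidiagonal.antidiagonal (N+1), ∑ σ : Equiv.Perm (Fin (N+2)),
            gAux p.1 ((k:ℤ)+(-1)) η (pd (N+2) σ φ) *
              gAux p.2 ((l:ℕ):ℤ) η (sh p.1 (pd (N+2) σ φ))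
          = 2 * ∑ σ : Equiv.Perm (Fin (N+2)),
              gAux (N+1) ((K:ℤ)+(-1)) η (pd (N+2) σ φ) := by
        have e1 : (k:ℤ)+(-1) = (((k-1:ℕ)):ℤ) := by omega
        have e2 : (((k-1:ℕ)):ℤ)+((l:ℕ):ℤ) = (K:ℤ)+(-1) := by omega
        rw [e1, havg (k-1) (by omega), e2]
      rw [hm1, if_neg hk1]
      ring
theorem mainBA : ∀ n, StmtB n ∧ StmtA n := by
  intro n
  induction n using Nat.strong_induction_on with
  | _ n ih =>
    have hB : StmtB n := stepB n (fun m hm => (ih m hm).2)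
    exact ⟨hB, stepA n hB⟩

theorem stmt5 (J K k : ℕ) (hKJ : K ≤ J) (hk0 : 0 < k) (hkK : k < K)
    (η : ℝ) (hη : η ≠ 0) (φ : ℕ → ℝ)
    (hres : ∀ K' J' : ℕ, 1 ≤ K' → K' ≤ J' → J' ≤ J →
      ∀ ι : Fin J' → Fin J, Function.Injective ι →
        (K' : ℝ) * η ≠ ∑ i, φ (ι i : ℕ)) :
    fAux J (K : ℤ) η φ =
      (1 / 2) * ∑ j ∈ Finset.range (J + 1),
        symProd j (J - j) (fAux j (k : ℤ)) (gAux (J - j) ((K : ℤ) - (k : ℤ))) η φ := by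
  have h := (mainBA J).1 K k hk0 hkK η φ hη hres
  rw [h, Finset.Nat.sum_antidiagonal_eq_sum_range_succ_mk]
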